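/- Let p be an odd prime, q = p^s, F = GF(q). In the code of the Type II ℓ=3 graph P(p,s) over GF(p), the vector taking value 1 at r and at each (x,t) with t ∈ F \ {−1}, value −1 at each (y,y) with y ∈ F, and value 0 elsewhere, is a codeword of Hamming weight 2q. Consequently the minimum distance d_min of this p-ary code satisfies q + 2 ≤ d_min ≤ 2q. -/

import Mathlib

open scoped Classical

namespace TypeII3

/-- Variable nodes of the Type II ℓ=3 graph: the root `r`, the nodes `(x,j)` (j ∈ F, with
`x` a formal symbol), and the nodes `(i,j)` (i, j ∈ F). -/
abbrev VN (F : Type*) := Unit ⊕ (F ⊕ (F × F))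

/-- Constraint nodes of the Type II ℓ=3 graph: `c_x`, the nodes `c_i` (i ∈ F), and the
nodes `(a,b)'` (a, b ∈ F). -/
abbrev CN (F : Type*) := Unit ⊕ (F ⊕ (F × F))

/-- Adjacency of the Type II ℓ=3 graph `P(p,s)`:
`r ~ c_x`; `r ~ c_i`; `c_x ~ (x,j)`; `c_i ~ (i,j)`; `(x,j) ~ (j,b)'` for every `b`; and
`(i,j) ~ (a, j + i·a)'` for every `a`. -/
def adj (F : Type*) [Field F] : VN F → CN F → Prop
  | Sum.inl _, Sum.inl _ => True                             -- r ~ c_x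
  | Sum.inl _, Sum.inr (Sum.inl _) => True                   -- r ~ c_i
  | Sum.inl _, Sum.inr (Sum.inr _) => False
  | Sum.inr (Sum.inl _), Sum.inl _ => True                   -- (x,j) ~ c_x
  | Sum.inr (Sum.inl _), Sum.inr (Sum.inl _) => False
  | Sum.inr (Sum.inl j), Sum.inr (Sum.inr (a, _)) => a = j   -- (x,j) ~ (j,b)'
  | Sum.inr (Sum.inr _), Sum.inl _ => False
  | Sum.inr (Sum.inr (i, _)), Sum.inr (Sum.inl k) => k = i   -- c_i ~ (i,j)
  | Sum.inr (Sum.inr (i, j)), Sum.inr (Sum.inr (a, b)) => b = j + i * a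

end TypeII3

/-- Hamming weight of a vector: the number of nonzero coordinates. -/
noncomputable def hamWt {V K : Type*} [Zero K] (x : V → K) : ℕ :=
  Nat.card {v : V // x v ≠ 0}

namespace TypeII3

/-- The code of the Type II ℓ=3 graph over `K`. -/
def InCode (F : Type*) [Field F] [Fintype F] (K : Type*) [AddCommMonoid K]
    (x : VN F → K) : Prop :=
  ∀ c : CN F, (∑ v : VN F, if adj F v c then x v else 0) = 0

/-- The minimum distance of the code of the Type II ℓ=3 graph over `K`. -/
noncomputable def dmin (F : Type*) [Field F] [Fintype F]
    (K : Type*) [AddCommMonoid K] : ℕ :=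
  sInf {w | ∃ x : VN F → K, InCode F K x ∧ x ≠ 0 ∧ hamWt x = w}

end TypeII3

/-- The vector over GF(p) taking value 1 at `r` and at each `(x,t)` with `t ≠ −1`,
value −1 at each `(y,y)`, and value 0 elsewhere. -/
noncomputable def cw (p : ℕ) (F : Type*) [Field F] : TypeII3.VN F → ZMod p
  | Sum.inl _ => 1
  | Sum.inr (Sum.inl t) => if t = -1 then 0 else 1
  | Sum.inr (Sum.inr (i, j)) => if j = i then -1 else 0

namespace TypeII3Aux

open TypeII3

variable {F : Type*} [Field F] [Fintype F] {K : Type*} [AddCommGroup K]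

lemma sum_cx (x : VN F → K) :
    (∑ v : VN F, if adj F v (Sum.inl ()) then x v else 0)
      = x (Sum.inl ()) + ∑ j : F, x (Sum.inr (Sum.inl j)) := by
  rw [Fintype.sum_sum_type, Fintype.sum_sum_type]
  simp [adj]

lemma sum_ck (x : VN F → K) (k : F) :
    (∑ v : VN F, if adj F v (Sum.inr (Sum.inl k)) then x v else 0)
      = x (Sum.inl ()) + ∑ j : F, x (Sum.inr (Sum.inr (k, j))) := by
  rw [Fintype.sum_sum_type, Fintype.sum_sum_type]
  simp only [adj.eq_1, adj.eq_2, adj.eq_3, adj.eq_4, adj.eq_5, adj.eq_6, adj.eq_7, adj.eq_8, adj.eq_9, if_true, if_false, Finset.sum_const_zero, add_zero, zero_add,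
    Fintype.sum_prod_type]
  congr 1
  · simp
  have h : (∑ i : F, ∑ j : F, if k = i then x (Sum.inr (Sum.inr (i, j))) else 0)
      = ∑ i : F, (if k = i then ∑ j : F, x (Sum.inr (Sum.inr (i, j))) else 0) :=
    Finset.sum_congr rfl (fun i _ => by split <;> simp)
  rw [h, Finset.sum_ite_eq Finset.univ k (fun i => ∑ j : F, x (Sum.inr (Sum.inr (i, j))))]
  simp

lemma sum_ab (x : VN F → K) (a b : F) :
    (∑ v : VN F, if adj F v (Sum.inr (Sum.inr (a, b))) then x v else 0)
      = x (Sum.inr (Sum.inl a)) + ∑ i : F, x (Sum.inr (Sum.inr (i, b - i * a))) := by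
  rw [Fintype.sum_sum_type, Fintype.sum_sum_type]
  simp only [adj.eq_1, adj.eq_2, adj.eq_3, adj.eq_4, adj.eq_5, adj.eq_6, adj.eq_7, adj.eq_8, adj.eq_9, if_false, Finset.sum_const_zero, zero_add, Fintype.sum_prod_type]
  congr 1
  · rw [Finset.sum_ite_eq Finset.univ a (fun j => x (Sum.inr (Sum.inl j)))]
    simp
  refine Finset.sum_congr rfl fun i _ => ?_
  have h : ∀ j : F, (b = j + i * a) ↔ (j = b - i * a) := fun j => by
    constructor <;> intro h <;> [rw [h]; rw [h]] <;> ring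
  simp only [h]
  rw [Finset.sum_ite_eq' Finset.univ (b - i * a) (fun j => x (Sum.inr (Sum.inr (i, j))))]
  simp

lemma exists_ne_of_sum_zero {ι : Type*} [Fintype ι] (f : ι → K)
    (hsum : ∑ i : ι, f i = 0) {i₀ : ι} (h0 : f i₀ ≠ 0) :
    ∃ i, i ≠ i₀ ∧ f i ≠ 0 := by
  by_contra h
  push_neg at h
  have := Finset.sum_eq_single i₀ (fun b _ hb => h b hb)
    (fun hmem => absurd (Finset.mem_univ i₀) hmem)
  rw [hsum] at this
  exact h0 this.symm

lemma aux_card {α β : Type*} [Fintype α] [DecidableEq β] (S : Finset β)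
    (v₁ v₂ : β) (g : α → β) (hg : Function.Injective g) (h12 : v₁ ≠ v₂)
    (h1 : ∀ a, v₁ ≠ g a) (h2 : ∀ a, v₂ ≠ g a)
    (hv1 : v₁ ∈ S) (hv2 : v₂ ∈ S) (hgS : ∀ a, g a ∈ S) :
    Fintype.card α + 2 ≤ S.card := by
  have hsub : insert v₁ (insert v₂ (Finset.univ.image g)) ⊆ S := by
    intro b hb
    simp only [Finset.mem_insert, Finset.mem_image, Finset.mem_univ, true_and] at hb
    rcases hb with rfl | rfl | ⟨a, _, rfl⟩
    · exact hv1
    · exact hv2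
    · exact hgS a
  have hcard : (insert v₁ (insert v₂ (Finset.univ.image g))).card
      = Fintype.card α + 2 := by
    rw [Finset.card_insert_of_notMem, Finset.card_insert_of_notMem,
      Finset.card_image_of_injective _ hg, Finset.card_univ]
    · simp only [Finset.mem_image, Finset.mem_univ, true_and, not_exists]
      exact fun a h => h2 a h.symm
    · simp only [Finset.mem_insert, Finset.mem_image, Finset.mem_univ, true_and,
        not_or, not_exists]
      exact ⟨h12, fun a h => h1 a h.symm⟩
  calc Fintype.card α + 2 = _ := hcard.symm
    _ ≤ S.card := Finset.card_le_card hsub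

/-- The key lower bound: any nonzero codeword has weight at least `card F + 2`. -/
lemma lower_bound (x : VN F → K) (hx : InCode F K x) (hne : x ≠ 0) :
    Fintype.card F + 2 ≤ hamWt x := by
  rw [hamWt, Nat.card_eq_fintype_card, Fintype.card_subtype]
  set S : Finset (VN F) := Finset.univ.filter (fun v : VN F => x v ≠ 0) with hS
  have memS : ∀ v : VN F, x v ≠ 0 → v ∈ S := fun v hv => by
    simp [hS, hv]
  have hcx : x (Sum.inl ()) + ∑ j : F, x (Sum.inr (Sum.inl j)) = 0 := by
    rw [← sum_cx]; exact hx (Sum.inl ())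
  have hck : ∀ k : F, x (Sum.inl ()) + ∑ j : F, x (Sum.inr (Sum.inr (k, j))) = 0 :=
    fun k => by rw [← sum_ck]; exact hx (Sum.inr (Sum.inl k))
  have hab : ∀ a b : F,
      x (Sum.inr (Sum.inl a)) + ∑ i : F, x (Sum.inr (Sum.inr (i, b - i * a))) = 0 :=
    fun a b => by rw [← sum_ab]; exact hx (Sum.inr (Sum.inr (a, b)))
  by_cases hr : x (Sum.inl ()) ≠ 0
  · -- Case 1 : the root is in the support
    have hrow : ∀ k : F, ∃ j : F, x (Sum.inr (Sum.inr (k, j))) ≠ 0 := by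
      intro k
      have : ∑ j : F, x (Sum.inr (Sum.inr (k, j))) ≠ 0 := by
        intro h
        have hk := hck k
        rw [h, add_zero] at hk
        exact hr hk
      obtain ⟨j, _, hj⟩ := Finset.exists_ne_zero_of_sum_ne_zero this
      exact ⟨j, hj⟩
    choose g hg using hrow
    have hcol : ∃ t : F, x (Sum.inr (Sum.inl t)) ≠ 0 := by
      have : ∑ j : F, x (Sum.inr (Sum.inl j)) ≠ 0 := by
        intro h
        rw [h, add_zero] at hcx
        exact hr hcx
      obtain ⟨t, _, ht⟩ := Finset.exists_ne_zero_of_sum_ne_zero this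
      exact ⟨t, ht⟩
    obtain ⟨t₀, ht₀⟩ := hcol
    refine aux_card S (Sum.inl ()) (Sum.inr (Sum.inl t₀))
      (fun k => Sum.inr (Sum.inr (k, g k))) ?_ ?_ ?_ ?_ ?_ ?_ ?_
    · intro k k' h
      simpa using (Prod.mk.injEq _ _ _ _ ▸ (by simpa using h : (k, g k) = (k', g k'))).1
    · simp
    · intro a; simp
    · intro a; simp
    · exact memS _ hr
    · exact memS _ ht₀
    · exact fun k => memS _ (hg k)
  · push_neg at hr
    by_cases hX : ∃ a : F, x (Sum.inr (Sum.inl a)) ≠ 0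
    · -- Case 2 : some (x,a) is in the support
      obtain ⟨a₀, ha₀⟩ := hX
      have hsum0 : ∑ j : F, x (Sum.inr (Sum.inl j)) = 0 := by
        rw [hr, zero_add] at hcx; exact hcx
      obtain ⟨a₁, ha₁ne, ha₁⟩ :=
        exists_ne_of_sum_zero (fun j : F => x (Sum.inr (Sum.inl j))) hsum0 ha₀
      have hline : ∀ b : F, ∃ i : F, x (Sum.inr (Sum.inr (i, b - i * a₀))) ≠ 0 := by
        intro b
        have : ∑ i : F, x (Sum.inr (Sum.inr (i, b - i * a₀))) ≠ 0 := by
          intro h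
          have hb := hab a₀ b
          rw [h, add_zero] at hb
          exact ha₀ hb
        obtain ⟨i, _, hi⟩ := Finset.exists_ne_zero_of_sum_ne_zero this
        exact ⟨i, hi⟩
      choose g hg using hline
      refine aux_card S (Sum.inr (Sum.inl a₀)) (Sum.inr (Sum.inl a₁))
        (fun b => Sum.inr (Sum.inr (g b, b - g b * a₀))) ?_ ?_ ?_ ?_ ?_ ?_ ?_
      · intro b b' h
        have h' : (g b, b - g b * a₀) = (g b', b' - g b' * a₀) := by simpa using h
        have h1 : g b = g b' := (Prod.mk.injEq _ _ _ _ ▸ h').1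
        have h2 : b - g b * a₀ = b' - g b' * a₀ := (Prod.mk.injEq _ _ _ _ ▸ h').2
        rw [h1] at h2
        linear_combination h2
      · simp [Ne.symm ha₁ne]
      · intro b; simp
      · intro b; simp
      · exact memS _ ha₀
      · exact memS _ ha₁
      · exact fun b => memS _ (hg b)
    · -- Case 3 : only plane points are in the support
      push_neg at hX
      have hexP : ∃ q : F × F, x (Sum.inr (Sum.inr q)) ≠ 0 := by
        by_contra h
        push_neg at h
        apply hne
        funext v
        rcases v with _ | v
        · exact hr
        rcases v with a | q
        · exact hX a
        · exact h q
      obtain ⟨⟨i₀, j₀⟩, hij⟩ := hexP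
      have hrow0 : ∑ j : F, x (Sum.inr (Sum.inr (i₀, j))) = 0 := by
        have := hck i₀; rw [hr, zero_add] at this; exact this
      obtain ⟨j₁, hj₁ne, hj₁⟩ :=
        exists_ne_of_sum_zero (fun j : F => x (Sum.inr (Sum.inr (i₀, j)))) hrow0 hij
      have hline : ∀ a : F, ∃ i : F, i ≠ i₀ ∧
          x (Sum.inr (Sum.inr (i, j₀ + i₀ * a - i * a))) ≠ 0 := by
        intro a
        have hsum : ∑ i : F, x (Sum.inr (Sum.inr (i, j₀ + i₀ * a - i * a))) = 0 := by
          have := hab a (j₀ + i₀ * a); rw [hX a, zero_add] at this; exact this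
        have h0 : x (Sum.inr (Sum.inr (i₀, j₀ + i₀ * a - i₀ * a))) ≠ 0 := by
          have : j₀ + i₀ * a - i₀ * a = j₀ := by ring
          rw [this]; exact hij
        exact exists_ne_of_sum_zero
          (fun i : F => x (Sum.inr (Sum.inr (i, j₀ + i₀ * a - i * a)))) hsum h0
      choose g hgne hg using hline
      refine aux_card S (Sum.inr (Sum.inr (i₀, j₀))) (Sum.inr (Sum.inr (i₀, j₁)))
        (fun a => Sum.inr (Sum.inr (g a, j₀ + i₀ * a - g a * a))) ?_ ?_ ?_ ?_ ?_ ?_ ?_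
      · intro a a' h
        have h' : (g a, j₀ + i₀ * a - g a * a) = (g a', j₀ + i₀ * a' - g a' * a') := by
          simpa using h
        have h1 : g a = g a' := (Prod.mk.injEq _ _ _ _ ▸ h').1
        have h2 : j₀ + i₀ * a - g a * a = j₀ + i₀ * a' - g a' * a' :=
          (Prod.mk.injEq _ _ _ _ ▸ h').2
        rw [h1] at h2
        have h3 : (i₀ - g a') * a = (i₀ - g a') * a' := by linear_combination h2
        have h4 : (i₀ - g a') ≠ 0 := sub_ne_zero.mpr (Ne.symm (h1 ▸ hgne a))
        exact mul_left_cancel₀ h4 h3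
      · simp [Ne.symm hj₁ne]
      · intro a
        simp only [ne_eq, Sum.inr.injEq, Prod.mk.injEq, not_and]
        intro h; exact absurd h.symm (hgne a)
      · intro a
        simp only [ne_eq, Sum.inr.injEq, Prod.mk.injEq, not_and]
        intro h; exact absurd h.symm (hgne a)
      · exact memS _ hij
      · exact memS _ hj₁
      · exact fun a => memS _ (hg a)

end TypeII3Aux

theorem stmt_11 (p s : ℕ) (hp : p.Prime) (hodd : p ≠ 2) (hs : 0 < s)
    (F : Type*) [Field F] [Fintype F] (hF : Fintype.card F = p ^ s) :
    -- the given vector is a codeword of the p-ary code of P(p,s)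
    TypeII3.InCode F (ZMod p) (cw p F) ∧
    -- of Hamming weight 2q
    hamWt (cw p F) = 2 * p ^ s ∧
    -- consequently q + 2 ≤ d_min ≤ 2q
    p ^ s + 2 ≤ TypeII3.dmin F (ZMod p) ∧
    TypeII3.dmin F (ZMod p) ≤ 2 * p ^ s := by
  haveI : Fact p.Prime := ⟨hp⟩
  have hcard : ((Fintype.card F : ℕ) : ZMod p) = 0 := by
    rw [hF]
    push_cast
    rw [ZMod.natCast_self, zero_pow hs.ne']
  -- InCode
  have hInCode : TypeII3.InCode F (ZMod p) (cw p F) := by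
    intro c
    rcases c with _ | c
    · rw [TypeII3Aux.sum_cx]
      have h0 : cw p F (Sum.inl ()) = 1 := rfl
      have h1 : ∀ j : F, cw p F (Sum.inr (Sum.inl j))
          = 1 - (if j = -1 then (1 : ZMod p) else 0) := by
        intro j
        show (if j = -1 then (0 : ZMod p) else 1) = _
        split <;> simp
      rw [h0]
      simp only [h1, Finset.sum_sub_distrib, Finset.sum_const, Finset.card_univ,
        nsmul_eq_mul, mul_one,
        Finset.sum_ite_eq' Finset.univ (-1 : F) (fun _ => (1 : ZMod p))]
      simp [hcard]
    rcases c with k | ⟨a, b⟩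
    · rw [TypeII3Aux.sum_ck]
      have h1 : ∀ j : F, cw p F (Sum.inr (Sum.inr (k, j)))
          = (if j = k then (-1 : ZMod p) else 0) := fun j => rfl
      simp only [h1, cw,
        Finset.sum_ite_eq' Finset.univ k (fun _ => (-1 : ZMod p))]
      simp
    · rw [TypeII3Aux.sum_ab]
      have h1 : ∀ i : F, cw p F (Sum.inr (Sum.inr (i, b - i * a)))
          = (if b - i * a = i then (-1 : ZMod p) else 0) := fun i => rfl
      have h2 : cw p F (Sum.inr (Sum.inl a)) = (if a = -1 then (0 : ZMod p) else 1) := rfl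
      rw [h2]
      simp only [h1]
      by_cases ha : a = -1
      · subst ha
        have h : ∀ i : F, (b - i * (-1) = i) ↔ (b = 0) := fun i => by
          constructor <;> intro h
          · linear_combination h
          · rw [h]; ring
        simp only [h, if_true]
        by_cases hb : b = 0
        · simp [hb, Finset.sum_const, Finset.card_univ, hcard]
        · simp [hb]
      · have hne : (1 : F) + a ≠ 0 := by
          intro h; apply ha; linear_combination h
        have h : ∀ i : F, (b - i * a = i) ↔ (i = b / (1 + a)) := fun i => by
          rw [eq_div_iff hne]
          constructor <;> intro h
          · linear_combination -h
          · linear_combination -h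
        simp only [h, if_neg ha]
        rw [Finset.sum_ite_eq' Finset.univ (b / (1 + a)) (fun _ => (-1 : ZMod p))]
        simp
  -- Hamming weight as a filter card
  have hwt_eq : ∀ x : TypeII3.VN F → ZMod p,
      hamWt x = (Finset.univ.filter (fun v => x v ≠ 0)).card := by
    intro x
    rw [hamWt, Nat.card_eq_fintype_card, Fintype.card_subtype]
  -- weight of cw
  have hwt : hamWt (cw p F) = 2 * p ^ s := by
    rw [hwt_eq, ← hF]
    rw [Finset.card_filter]
    rw [Fintype.sum_sum_type, Fintype.sum_sum_type]
    have h1 : (∑ _u : Unit, if cw p F (Sum.inl _u) ≠ 0 then 1 else 0) = 1 := by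
      simp [cw]
    have h2 : (∑ t : F, if cw p F (Sum.inr (Sum.inl t)) ≠ 0 then 1 else 0)
        = Fintype.card F - 1 := by
      have ht : ∀ t : F, (if cw p F (Sum.inr (Sum.inl t)) ≠ 0 then (1 : ℕ) else 0)
          = if t = -1 then 0 else 1 := by
        intro t; simp only [cw]; split <;> simp_all
      simp only [ht]
      have key : (∑ t : F, if t = -1 then (0 : ℕ) else 1) + 1 = Fintype.card F := by
        have hsum : (∑ t : F, if t = -1 then (0 : ℕ) else 1)
            + (∑ t : F, if t = -1 then (1 : ℕ) else 0) = ∑ _t : F, 1 := by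
          rw [← Finset.sum_add_distrib]
          refine Finset.sum_congr rfl fun t _ => by split <;> simp
        rw [Finset.sum_ite_eq' Finset.univ (-1 : F) (fun _ => (1 : ℕ))] at hsum
        simpa using hsum
      omega
    have h3 : (∑ q : F × F, if cw p F (Sum.inr (Sum.inr q)) ≠ 0 then 1 else 0)
        = Fintype.card F := by
      have hq : ∀ q : F × F, (if cw p F (Sum.inr (Sum.inr q)) ≠ 0 then (1 : ℕ) else 0)
          = if q.2 = q.1 then 1 else 0 := by
        rintro ⟨i, j⟩; simp only [cw]; split <;> simp_all
      simp only [hq, Fintype.sum_prod_type]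
      have hd : ∀ i : F, (∑ j : F, if j = i then (1 : ℕ) else 0) = 1 := by
        intro i; rw [Finset.sum_ite_eq' Finset.univ i (fun _ => (1 : ℕ))]; simp
      simp [hd]
    rw [h1, h2, h3]
    have : 1 ≤ Fintype.card F := Fintype.card_pos
    omega
  have hne0 : cw p F ≠ 0 := by
    intro h
    have := congrFun h (Sum.inl ())
    simp only [cw, Pi.zero_apply] at this
    exact one_ne_zero this
  refine ⟨hInCode, hwt, ?_, ?_⟩
  · -- lower bound
    refine le_csInf ⟨2 * p ^ s, cw p F, hInCode, hne0, hwt⟩ ?_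
    rintro w ⟨x, hxc, hxne, rfl⟩
    rw [← hF]
    exact TypeII3Aux.lower_bound x hxc hxne
  · exact Nat.sInf_le ⟨cw p F, hInCode, hne0, hwt⟩
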